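/- arXiv:1704.07072 — 4 statements merged into one kernel-verified Lean document; each statement's English description precedes it below -/
import Mathlib

section
/- Any unit dual quaternion Q with rotation angle θ satisfying sin(θ/2) ≠ 0 can be written as Q = [cos(Θ/2), sin(Θ/2)·V], where Θ = θ + εθ_ε is a dual angle and V = v + εv_ε is a dual vector with v a unit vector and v·v_ε = 0 (the Plücker conditions of a screw axis). -/
open scoped Quaternion Matrix

/-- The dual quaternion `r + ε s`. -/
def dq (r s : ℍ[ℝ]) : DualNumber ℍ[ℝ] := ⟨r, s⟩

theorem unit_dual_quaternion_screw_form (θ : ℝ) (hθ : Real.sin (θ / 2) ≠ 0)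
    (v t : Fin 3 → ℝ) (hv : v ⬝ᵥ v = 1)
    (r : ℍ[ℝ])
    (hr : r = ⟨Real.cos (θ / 2), Real.sin (θ / 2) * v 0, Real.sin (θ / 2) * v 1,
      Real.sin (θ / 2) * v 2⟩)
    (tq : ℍ[ℝ]) (htq : tq = ⟨0, t 0, t 1, t 2⟩) :
    ∃ θε : ℝ, ∃ vε : Fin 3 → ℝ, v ⬝ᵥ vε = 0 ∧
      dq r ((2⁻¹ : ℝ) • (tq * r)) =
        dq ⟨Real.cos (θ / 2), Real.sin (θ / 2) * v 0, Real.sin (θ / 2) * v 1,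
              Real.sin (θ / 2) * v 2⟩
           ⟨-(θε / 2) * Real.sin (θ / 2),
              Real.sin (θ / 2) * vε 0 + (θε / 2) * Real.cos (θ / 2) * v 0,
              Real.sin (θ / 2) * vε 1 + (θε / 2) * Real.cos (θ / 2) * v 1,
              Real.sin (θ / 2) * vε 2 + (θε / 2) * Real.cos (θ / 2) * v 2⟩ := by
  set s := Real.sin (θ / 2) with hs
  set c := Real.cos (θ / 2) with hc
  have hv' : v 0 * v 0 + v 1 * v 1 + v 2 * v 2 = 1 := by
    simpa [dotProduct, Fin.sum_univ_three] using hv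
  set p : ℝ := t 0 * v 0 + t 1 * v 1 + t 2 * v 2 with hp
  set w : Fin 3 → ℝ := ![t 1 * v 2 - t 2 * v 1, t 2 * v 0 - t 0 * v 2,
    t 0 * v 1 - t 1 * v 0] with hw
  refine ⟨p, fun i => (c / (2 * s)) * (t i - p * v i) + (1 / 2) * w i, ?_, ?_⟩
  · simp only [dotProduct, Fin.sum_univ_three, hw, hp,
      Matrix.cons_val_zero, Matrix.cons_val_one, Matrix.head_cons,
      Matrix.cons_val_two, Matrix.tail_cons]
    field_simp
    linear_combination (-c * (t 0 * v 0 + t 1 * v 1 + t 2 * v 2)) * hv'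
  · subst hr htq
    simp only [dq]
    apply Prod.ext_iff.mpr
    refine ⟨rfl, ?_⟩
    rw [Quaternion.ext_iff]
    erw [Quaternion.re_smul, Quaternion.imI_smul, Quaternion.imJ_smul,
      Quaternion.imK_smul, Quaternion.re_mul, Quaternion.imI_mul,
      Quaternion.imJ_mul, Quaternion.imK_mul]
    simp only [smul_eq_mul]
    refine ⟨by ring, ?_, ?_, ?_⟩ <;> · simp [hw]; field_simp; ring
end

section
/- For a rotation R about unit axis v by angle θ (Rodrigues formula), the point u = (1/2)(t - (tᵀv)v + cot(θ/2) v × t) satisfies (I - R)u = t - (tᵀv)v, i.e., it solves the fixed-axis equation for the component of t orthogonal to v, and moreover uᵀv = 0. -/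
open scoped Matrix

lemma bac_cab (v u : Fin 3 → ℝ) : v ⨯₃ (v ⨯₃ u) = (v ⬝ᵥ u) • v - (v ⬝ᵥ v) • u := by
  ext i
  fin_cases i <;>
    simp [crossProduct, dotProduct, Fin.sum_univ_three] <;> ring

theorem screw_axis_point_solves_fixed_axis_equation (θ : ℝ) (hθ : Real.sin (θ / 2) ≠ 0)
    (v t : Fin 3 → ℝ) (hv : v ⬝ᵥ v = 1) :
    let u := (2⁻¹ : ℝ) •
      (t - (t ⬝ᵥ v) • v + (Real.cos (θ / 2) / Real.sin (θ / 2)) • (v ⨯₃ t))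
    let Ru := u + Real.sin θ • (v ⨯₃ u) + (1 - Real.cos θ) • (v ⨯₃ (v ⨯₃ u))
    u - Ru = t - (t ⬝ᵥ v) • v ∧ u ⬝ᵥ v = 0 := by
  intro u Ru
  set s := Real.sin (θ / 2) with hs_def
  set c := Real.cos (θ / 2) with hc_def
  have hsc : s ^ 2 + c ^ 2 = 1 := Real.sin_sq_add_cos_sq _
  have h1 : Real.sin θ = 2 * s * c := by
    rw [show θ = 2 * (θ / 2) by ring, Real.sin_two_mul]
  have h2 : Real.cos θ = 1 - 2 * s ^ 2 := by
    rw [show θ = 2 * (θ / 2) by ring, Real.cos_two_mul]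
    nlinarith [hsc]
  have huv : u ⬝ᵥ v = 0 := by
    simp only [u, smul_dotProduct, add_dotProduct, sub_dotProduct,
      dotProduct_comm (v ⨯₃ t) v, dot_self_cross, hv, dotProduct_comm t v,
      smul_eq_mul]
    ring
  have hvu : v ⬝ᵥ u = 0 := by rw [dotProduct_comm]; exact huv
  have hvvu : v ⨯₃ (v ⨯₃ u) = -u := by
    rw [bac_cab, hvu, hv]; simp
  have hvvt : v ⨯₃ (v ⨯₃ t) = (v ⬝ᵥ t) • v - t := by rw [bac_cab, hv, one_smul]
  have hvu2 : v ⨯₃ u = (2⁻¹ : ℝ) • (v ⨯₃ t + (c / s) • ((v ⬝ᵥ t) • v - t)) := by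
    show (crossProduct v) u = _
    simp only [u, map_smul, map_add, map_sub, ← hs_def, ← hc_def]
    rw [show (crossProduct v) v = v ⨯₃ v from rfl, cross_self, smul_zero, sub_zero, hvvt]
  refine ⟨?_, huv⟩
  have key : u - Ru = (1 - Real.cos θ) • u - Real.sin θ • (v ⨯₃ u) := by
    simp only [Ru, hvvu, smul_neg]
    module
  rw [key, hvu2, h1, h2]
  simp only [u, ← hs_def, ← hc_def, dotProduct_comm v t]
  match_scalars
  · field_simp
    ring_nf
    linear_combination 2 * hsc
  · field_simp
    ring_nf
    linear_combination (-(2 * (t ⬝ᵥ v))) * hsc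
  · field_simp
    ring_nf
end

section
/- Let r = [q₀, q] be a unit quaternion for rotation by angle θ about unit axis v, θ_ε = tᵀv, and v_ε the screw moment v_ε = (1/2)(t × v + cot(θ/2) v × (t × v)). Then sin(θ/2)·v_ε + (θ_ε/2)·cos(θ/2)·v = (1/2)(t × q + q₀ t), which equals the vector part of (1/2)t·r. -/
open scoped Quaternion Matrix

theorem screw_moment_vector_part (θ : ℝ) (hθ : Real.sin (θ / 2) ≠ 0)
    (v t : Fin 3 → ℝ) (hv : v ⬝ᵥ v = 1) :
    let θε := t ⬝ᵥ v
    let vε := (2⁻¹ : ℝ) •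
      ((t ⨯₃ v) + (Real.cos (θ / 2) / Real.sin (θ / 2)) • (v ⨯₃ (t ⨯₃ v)))
    let q₀ := Real.cos (θ / 2)
    let q := Real.sin (θ / 2) • v
    let w := (2⁻¹ : ℝ) • ((t ⨯₃ q) + q₀ • t)
    let r : ℍ[ℝ] := ⟨q₀, q 0, q 1, q 2⟩
    let tq : ℍ[ℝ] := ⟨0, t 0, t 1, t 2⟩
    Real.sin (θ / 2) • vε + ((θε / 2) * Real.cos (θ / 2)) • v = w ∧
      ((2⁻¹ : ℝ) • (tq * r)).imI = w 0 ∧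
      ((2⁻¹ : ℝ) • (tq * r)).imJ = w 1 ∧
      ((2⁻¹ : ℝ) • (tq * r)).imK = w 2 := by
  intro θε vε q₀ q w r tq
  simp only [dotProduct, Fin.sum_univ_three] at hv
  refine ⟨?_, ?_, ?_, ?_⟩
  · funext i
    fin_cases i <;>
      simp [vε, θε, q, w, q₀, crossProduct, dotProduct, Fin.sum_univ_three,
        Matrix.vecHead, Matrix.vecTail, smul_eq_mul] <;>
      field_simp <;>
      [ linear_combination (Real.cos (θ/2) * t 0) * hv;
        linear_combination (Real.cos (θ/2) * t 1) * hv;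
        linear_combination (Real.cos (θ/2) * t 2) * hv]
  all_goals
    simp only [tq, r, Quaternion.imI_smul, Quaternion.imJ_smul, Quaternion.imK_smul]
  on_goal 1 => erw [Quaternion.imI_mul]
  on_goal 2 => erw [Quaternion.imJ_mul]
  on_goal 3 => erw [Quaternion.imK_mul]
  all_goals
    simp [Quaternion.imI_mul, Quaternion.imJ_mul, Quaternion.imK_mul, w, q, q₀, tq, r,
      crossProduct, Matrix.vecHead, Matrix.vecTail, smul_eq_mul] <;> ring
end

section
/- For a pure dual quaternion of the form Q = V·(Θ/2), where V = v + εv_ε is a dual unit vector (‖v‖ = 1, v·v_ε = 0) and Θ = θ + εθ_ε a dual angle, the dual quaternion exponential satisfies exp(V·Θ/2) = [cos(Θ/2), sin(Θ/2)·V]. -/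
open scoped Quaternion
open TrivSqZeroExt NormedSpace

@[simp] lemma dq_fst (r s : ℍ[ℝ]) : (dq r s).fst = r := rfl
@[simp] lemma dq_snd (r s : ℍ[ℝ]) : (dq r s).snd = s := rfl

lemma sin_abs_div_mul (a : ℝ) : Real.sin |a| / |a| * a = Real.sin a := by
  rcases eq_or_ne a 0 with rfl | ha
  · simp
  · rcases abs_cases a with ⟨h, _⟩ | ⟨h, _⟩ <;> rw [h] <;> field_simp <;> simp [Real.sin_neg]

lemma exp_smul_pure (a : ℝ) (v : ℍ[ℝ]) (hv : v.re = 0) (hu : ‖v‖ = 1) :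
    exp (a • v) = ((Real.cos a : ℝ) : ℍ[ℝ]) + Real.sin a • v := by
  have h0 : (a • v).re = 0 := by simp [hv]
  rw [Quaternion.exp_of_re_eq_zero _ h0]
  have hn : ‖a • v‖ = |a| := by rw [norm_smul, hu, Real.norm_eq_abs, mul_one]
  rw [hn, Real.cos_abs, smul_smul, sin_abs_div_mul]

set_option maxHeartbeats 1000000 in
theorem exp_dual_quaternion_screw (θ θε : ℝ) (vq vε : ℍ[ℝ])
    (hv : vq.re = 0) (hvε : vε.re = 0) (hunit : ‖vq‖ = 1)
    (horth : (vq * vε).re = 0) :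
    NormedSpace.exp
        (dq vq vε * dq ((θ / 2 : ℝ) : ℍ[ℝ]) ((θε / 2 : ℝ) : ℍ[ℝ])) =
      dq (((Real.cos (θ / 2) : ℝ) : ℍ[ℝ]) + Real.sin (θ / 2) • vq)
         (((-(θε / 2) * Real.sin (θ / 2) : ℝ) : ℍ[ℝ]) + Real.sin (θ / 2) • vε +
            ((θε / 2) * Real.cos (θ / 2)) • vq) := by
  have hq2 : vq * vq = -1 := by
    have h1 : star vq = -vq := Quaternion.star_eq_neg.mpr hv
    have h2 : vq * star vq = ((Quaternion.normSq vq : ℝ) : ℍ[ℝ]) := Quaternion.self_mul_star vq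
    have h3 : (Quaternion.normSq vq : ℝ) = 1 := by
      rw [Quaternion.normSq_eq_norm_mul_self, hunit, mul_one]
    rw [h1, mul_neg, h3] at h2
    simpa using congrArg Neg.neg h2
  have hanti : vε * vq = -(vq * vε) := by
    have h1 : star vq = -vq := Quaternion.star_eq_neg.mpr hv
    have h2 : star vε = -vε := Quaternion.star_eq_neg.mpr hvε
    have h3 : star (vq * vε) = -(vq * vε) := Quaternion.star_eq_neg.mpr horth
    calc vε * vq = -vε * -vq := by rw [neg_mul_neg]
      _ = star vε * star vq := by rw [h1, h2]
      _ = star (vq * vε) := (star_mul _ _).symm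
      _ = -(vq * vε) := h3
  set w : ℍ[ℝ] := (2⁻¹ : ℝ) • (vε * vq) with hw
  have hvqw : vq * w = (2⁻¹ : ℝ) • vε := by
    rw [hw, mul_smul_comm, hanti, mul_neg, ← mul_assoc, hq2, neg_one_mul, neg_neg]
  have hwvq : w * vq = (-2⁻¹ : ℝ) • vε := by
    rw [hw, smul_mul_assoc, mul_assoc, hq2, mul_neg_one]
    module
  have hval : ((1 : DualNumber ℍ[ℝ]) + inr w) * (1 - inr w) = 1 := by
    rw [mul_sub, mul_one, add_mul, one_mul, inr_mul_inr]
    abel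
  have hval' : ((1 : DualNumber ℍ[ℝ]) - inr w) * (1 + inr w) = 1 := by
    rw [mul_add, mul_one, sub_mul, one_mul, inr_mul_inr]
    abel
  set u : (DualNumber ℍ[ℝ])ˣ := ⟨1 + inr w, 1 - inr w, hval, hval'⟩ with hu
  have hucoe : (u : DualNumber ℍ[ℝ]) = 1 + inr w := rfl
  have huinv : ((u⁻¹ : (DualNumber ℍ[ℝ])ˣ) : DualNumber ℍ[ℝ]) = 1 - inr w := rfl
  set x' : DualNumber ℍ[ℝ] := dq ((θ / 2 : ℝ) • vq) ((θε / 2 : ℝ) • vq) with hx'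
  have hconj : dq vq vε * dq ((θ / 2 : ℝ) : ℍ[ℝ]) ((θε / 2 : ℝ) : ℍ[ℝ])
      = ↑u⁻¹ * x' * ↑u := by
    rw [huinv, hucoe, hx']
    apply TrivSqZeroExt.ext
    · simp only [fst_mul, fst_sub, fst_add, fst_inr, fst_one, dq_fst,
        sub_zero, add_zero, one_mul, mul_one]
      exact Quaternion.mul_coe_eq_smul _ _
    · simp only [snd_mul, fst_mul, fst_sub, fst_add, fst_inr, fst_one, snd_sub, snd_add,
        snd_inr, snd_one, dq_fst, dq_snd, sub_zero, add_zero, one_mul, mul_one, zero_sub,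
        zero_add, one_smul, smul_eq_mul, MulOpposite.smul_eq_mul_unop, MulOpposite.unop_op,
        MulOpposite.unop_one, Quaternion.mul_coe_eq_smul, smul_mul_assoc, mul_smul_comm,
        hvqw, hwvq, mul_neg, neg_mul]
      module
  let +nondep : NormedAlgebra ℚ (DualNumber ℍ[ℝ]) := .restrictScalars ℚ ℝ _
  rw [hconj, exp_units_conj' u x']
  have hexpx' : exp x' = inl (exp ((θ / 2 : ℝ) • vq))
      + inr (exp ((θ / 2 : ℝ) • vq) • ((θε / 2 : ℝ) • vq)) := by
    have hcomm : MulOpposite.op x'.fst • x'.snd = x'.fst • x'.snd := by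
      rw [hx']
      simp only [dq_fst, dq_snd, MulOpposite.smul_eq_mul_unop, MulOpposite.unop_op, smul_eq_mul,
        mul_smul_comm, smul_mul_assoc]
      rw [smul_comm]
    simpa [hx'] using exp_def_of_smul_comm x' hcomm
  rw [hexpx', exp_smul_pure _ _ hv hunit, huinv, hucoe]
  have hcoe : ∀ x : ℝ, (x : ℍ[ℝ]) = x • (1 : ℍ[ℝ]) := fun x => by
    rw [← Quaternion.coe_one, Quaternion.smul_coe, mul_one]
  apply TrivSqZeroExt.ext
  · simp only [fst_mul, fst_sub, fst_add, fst_inr, fst_inl, fst_one, dq_fst,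
      sub_zero, add_zero, one_mul, mul_one]
  · simp only [snd_mul, fst_mul, fst_sub, fst_add, fst_inr, fst_inl, fst_one, snd_sub, snd_add,
      snd_inr, snd_inl, snd_one, dq_snd, sub_zero, add_zero, one_mul, mul_one, zero_sub,
      zero_add, one_smul, smul_eq_mul, MulOpposite.smul_eq_mul_unop, MulOpposite.unop_op,
      MulOpposite.unop_one, smul_mul_assoc, mul_smul_comm, add_mul, mul_add,
      Quaternion.coe_mul_eq_smul, Quaternion.mul_coe_eq_smul, hvqw, hwvq, hq2, mul_neg, neg_mul, hcoe, mul_zero, zero_mul, smul_zero, neg_zero, zero_add, add_zero]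
    module
end
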